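/- The number of involutions of {1,...,n} avoiding both 3412 and 321 equals the Fibonacci number F_{n+1} (with F_1 = F_2 = 1). -/

import Mathlib

def Av3412 {n : ℕ} (σ : Equiv.Perm (Fin n)) : Prop :=
  ¬ ∃ i j k l : Fin n, i < j ∧ j < k ∧ k < l ∧ σ k < σ l ∧ σ l < σ i ∧ σ i < σ j

def Av321 {n : ℕ} (σ : Equiv.Perm (Fin n)) : Prop :=
  ¬ ∃ i j k : Fin n, i < j ∧ j < k ∧ σ k < σ j ∧ σ j < σ i

def NN {n : ℕ} (f : Fin n → Fin n) : Prop :=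
  ∀ i : Fin n, (f i : ℕ) = i ∨ (f i : ℕ) = (i : ℕ) + 1 ∨ (f i : ℕ) + 1 = i

lemma key_far {n : ℕ} (σ : Equiv.Perm (Fin n)) (h : Function.Involutive ⇑σ)
    (h34 : Av3412 σ) (h321 : Av321 σ) (i : Fin n) (hlt : (i : ℕ) + 1 < (σ i : ℕ)) : False := by
  set j := σ i with hj
  have hji : σ j = i := h i
  have hjn : (j : ℕ) < n := j.isLt
  set k : Fin n := ⟨(i : ℕ) + 1, by omega⟩ with hk
  have hik : i < k := by simp [Fin.lt_def, hk]
  have hkj : k < j := by rw [Fin.lt_def]; exact hlt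
  have hkk : σ (σ k) = k := h k
  have hki : σ k ≠ i := by
    intro e
    have : k = j := by rw [← hkk, e, ← hj]
    exact absurd this (ne_of_lt hkj)
  have hkj2 : σ k ≠ j := by
    intro e
    have : k = i := by rw [← hkk, e, hji]
    exact absurd this (ne_of_gt hik)
  have hval : (σ k : ℕ) < i ∨ ((i : ℕ) < σ k ∧ (σ k : ℕ) < j) ∨ (j : ℕ) < σ k := by
    have e1 : (σ k : ℕ) ≠ (i : ℕ) := fun e => hki (Fin.ext e)
    have e2 : (σ k : ℕ) ≠ (j : ℕ) := fun e => hkj2 (Fin.ext e)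
    omega
  rcases hval with hA | ⟨hB1, hB2⟩ | hC
  · exact h34 ⟨σ k, i, k, j, Fin.lt_def.mpr hA, hik, hkj,
      by rw [hji]; exact Fin.lt_def.mpr hA,
      by rw [hji, hkk]; exact hik,
      by rw [hkk, ← hj]; exact hkj⟩
  · exact h321 ⟨i, k, j, hik, hkj,
      by rw [hji]; exact Fin.lt_def.mpr hB1,
      by rw [← hj]; exact Fin.lt_def.mpr hB2⟩
  · exact h34 ⟨i, k, j, σ k, hik, hkj, Fin.lt_def.mpr hC,
      by rw [hji, hkk]; exact hik,
      by rw [hkk, ← hj]; exact hkj,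
      by rw [← hj]; exact Fin.lt_def.mpr hC⟩

lemma nn_of_av {n : ℕ} (σ : Equiv.Perm (Fin n)) (h : Function.Involutive ⇑σ)
    (h34 : Av3412 σ) (h321 : Av321 σ) : NN ⇑σ := by
  intro i
  by_contra hc
  push_neg at hc
  obtain ⟨c1, c2, c3⟩ := hc
  rcases lt_trichotomy ((σ i : ℕ)) (i : ℕ) with hl | he | hg
  · have : ((σ i : ℕ)) + 1 < ((σ (σ i) : ℕ)) := by rw [h i]; omega
    exact key_far σ h h34 h321 (σ i) this
  · exact c1 he
  · exact key_far σ h h34 h321 i (by omega)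

lemma av_of_nn {n : ℕ} (σ : Equiv.Perm (Fin n)) (hnn : NN ⇑σ) : Av3412 σ ∧ Av321 σ := by
  constructor
  · rintro ⟨i, j, k, l, hij, hjk, hkl, h1, h2, h3⟩
    rw [Fin.lt_def] at hij hjk hkl h1 h2 h3
    rcases hnn i with hi | hi | hi <;> rcases hnn l with hl | hl | hl <;> omega
  · rintro ⟨i, j, k, hij, hjk, h1, h2⟩
    rw [Fin.lt_def] at hij hjk h1 h2
    rcases hnn i with hi | hi | hi <;> rcases hnn j with hj | hj | hj <;>
      rcases hnn k with hk | hk | hk <;> omega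

def GFun (n : ℕ) := {f : Fin n → Fin n // Function.Involutive f ∧ NN f}

instance (n : ℕ) : Finite (GFun n) := Subtype.finite

def ext1 {n : ℕ} (f : Fin n → Fin n) : Fin (n + 1) → Fin (n + 1) :=
  Fin.lastCases (Fin.last n) (fun i => (f i).castSucc)

@[simp] lemma ext1_castSucc {n : ℕ} (f : Fin n → Fin n) (i : Fin n) :
    ext1 f i.castSucc = (f i).castSucc := Fin.lastCases_castSucc i

@[simp] lemma ext1_last {n : ℕ} (f : Fin n → Fin n) :
    ext1 f (Fin.last n) = Fin.last n := Fin.lastCases_last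

lemma ext1_invol {n : ℕ} {f : Fin n → Fin n} (hf : Function.Involutive f) :
    Function.Involutive (ext1 f) := by
  intro x
  induction x using Fin.lastCases with
  | last => simp
  | cast i => simp [hf i]

lemma ext1_nn {n : ℕ} {f : Fin n → Fin n} (hf : NN f) :
    NN (ext1 f) := by
  intro x
  induction x using Fin.lastCases with
  | last => left; simp
  | cast i => simpa using hf i

def ext2 {n : ℕ} (f : Fin n → Fin n) : Fin (n + 2) → Fin (n + 2) :=
  (Equiv.swap (Fin.last (n + 1)) ((Fin.last n).castSucc)) ∘ ext1 (ext1 f)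

@[simp] lemma ext2_last {n : ℕ} (f : Fin n → Fin n) :
    ext2 f (Fin.last (n + 1)) = (Fin.last n).castSucc := by
  simp [ext2, Equiv.swap_apply_left]

@[simp] lemma ext2_b {n : ℕ} (f : Fin n → Fin n) :
    ext2 f ((Fin.last n).castSucc) = Fin.last (n + 1) := by
  simp [ext2, Equiv.swap_apply_right]

@[simp] lemma ext2_castSucc {n : ℕ} (f : Fin n → Fin n) (i : Fin n) :
    ext2 f i.castSucc.castSucc = (f i).castSucc.castSucc := by
  have h1 : (f i).castSucc.castSucc ≠ Fin.last (n + 1) :=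
    Fin.ne_of_val_ne (by have := (f i).isLt; simp; omega)
  have h2 : (f i).castSucc.castSucc ≠ (Fin.last n).castSucc :=
    Fin.ne_of_val_ne (by have := (f i).isLt; simp; omega)
  simp [ext2, Equiv.swap_apply_of_ne_of_ne h1 h2]

lemma ext2_invol {n : ℕ} {f : Fin n → Fin n} (hf : Function.Involutive f) :
    Function.Involutive (ext2 f) := by
  intro x
  induction x using Fin.lastCases with
  | last => simp
  | cast y =>
    induction y using Fin.lastCases with
    | last => simp
    | cast i => simp [hf i]

lemma ext2_nn {n : ℕ} {f : Fin n → Fin n} (hf : NN f) : NN (ext2 f) := by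
  intro x
  induction x using Fin.lastCases with
  | last => right; right; simp
  | cast y =>
    induction y using Fin.lastCases with
    | last => right; left; simp
    | cast i =>
      have := hf i
      simp only [ext2_castSucc, Fin.coe_castSucc]
      simpa using this

def Fsum {n : ℕ} : GFun (n + 1) ⊕ GFun n → GFun (n + 2) :=
  Sum.elim (fun f => ⟨ext1 f.1, ext1_invol f.2.1, ext1_nn f.2.2⟩)
    (fun f => ⟨ext2 f.1, ext2_invol f.2.1, ext2_nn f.2.2⟩)

@[simp] lemma Fsum_inl {n : ℕ} (f : GFun (n + 1)) : (Fsum (Sum.inl f)).1 = ext1 f.1 := rfl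

@[simp] lemma Fsum_inr {n : ℕ} (f : GFun n) : (Fsum (n := n) (Sum.inr f)).1 = ext2 f.1 := rfl

lemma Fsum_bij {n : ℕ} : Function.Bijective (Fsum (n := n)) := by
  constructor
  · rintro (f | f) (g | g) h <;>
      (have h := congrArg Subtype.val h; simp only [Fsum_inl, Fsum_inr] at h)
    · congr 1
      apply Subtype.ext
      funext i
      have := congrFun h i.castSucc
      simpa [Fin.castSucc_inj] using this
    · exfalso
      have := congrFun h (Fin.last (n + 1))
      simp at this
      exact absurd this.symm (Fin.ne_of_val_ne (by simp))
    · exfalso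
      have := congrFun h (Fin.last (n + 1))
      simp at this
    · congr 1
      apply Subtype.ext
      funext i
      have := congrFun h i.castSucc.castSucc
      simpa [Fin.castSucc_inj] using this
  · rintro ⟨g, hinv, hnn⟩
    have hcase : g (Fin.last (n + 1)) = Fin.last (n + 1) ∨
        g (Fin.last (n + 1)) = (Fin.last n).castSucc := by
      rcases hnn (Fin.last (n + 1)) with h | h | h
      · left; exact Fin.ext (by simpa using h)
      · exfalso; have := (g (Fin.last (n + 1))).isLt; simp [Fin.val_last] at h; omega
      · right; exact Fin.ext (by simp [Fin.val_last] at h ⊢; omega)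
    rcases hcase with hfix | hswap
    · -- g fixes last; restrict
      have hne : ∀ i : Fin (n + 1), g i.castSucc ≠ Fin.last (n + 1) := by
        intro i he
        have : i.castSucc = Fin.last (n + 1) := hinv.injective (by rw [he, hfix])
        exact absurd this (Fin.ne_of_val_ne (by simp [Fin.castSucc_lt_last i |>.ne]; omega))
      set f : Fin (n + 1) → Fin (n + 1) := fun i => (g i.castSucc).castPred (hne i) with hfdef
      have hfval : ∀ i, (f i : ℕ) = (g i.castSucc : ℕ) := fun i => rfl
      have hfcs : ∀ i, (f i).castSucc = g i.castSucc := fun i => Fin.castSucc_castPred _ _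
      have hfinv : Function.Involutive f := by
        intro i
        apply Fin.ext
        rw [hfval, hfcs, hinv]
        simp
      have hfnn : NN f := by
        intro i
        have := hnn i.castSucc
        simpa [hfval i] using this
      refine ⟨Sum.inl ⟨f, hfinv, hfnn⟩, ?_⟩
      apply Subtype.ext
      funext x
      induction x using Fin.lastCases with
      | last => exact (ext1_last f).trans hfix.symm
      | cast i => exact (ext1_castSucc f i).trans (hfcs i)
    · -- g swaps last two
      have hb : g ((Fin.last n).castSucc) = Fin.last (n + 1) := by
        rw [← hswap, hinv]
      have hlt : ∀ i : Fin n, (g i.castSucc.castSucc : ℕ) < n := by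
        intro i
        have h1 : g i.castSucc.castSucc ≠ Fin.last (n + 1) := by
          intro he
          have : i.castSucc.castSucc = (Fin.last n).castSucc :=
            hinv.injective (by rw [he, hb])
          exact absurd (congrArg Fin.val this) (by simp; omega)
        have h2 : g i.castSucc.castSucc ≠ (Fin.last n).castSucc := by
          intro he
          have : i.castSucc.castSucc = Fin.last (n + 1) :=
            hinv.injective (by rw [he, hswap])
          exact absurd (congrArg Fin.val this) (by simp; omega)
        have := (g i.castSucc.castSucc).isLt
        have v1 : (g i.castSucc.castSucc : ℕ) ≠ n + 1 := fun e => h1 (Fin.ext (by simpa using e))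
        have v2 : (g i.castSucc.castSucc : ℕ) ≠ n := fun e => h2 (Fin.ext (by simpa using e))
        omega
      set f : Fin n → Fin n := fun i => ⟨(g i.castSucc.castSucc : ℕ), hlt i⟩ with hfdef
      have hfcs : ∀ i, (f i).castSucc.castSucc = g i.castSucc.castSucc := by
        intro i; apply Fin.ext; simp [hfdef]
      have hfinv : Function.Involutive f := by
        intro i
        apply Fin.ext
        show (g (f i).castSucc.castSucc : ℕ) = i
        rw [hfcs, hinv]
        simp
      have hfnn : NN f := by
        intro i
        have := hnn i.castSucc.castSucc
        simpa [hfdef] using this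
      refine ⟨Sum.inr ⟨f, hfinv, hfnn⟩, ?_⟩
      apply Subtype.ext
      funext x
      induction x using Fin.lastCases with
      | last => exact (ext2_last f).trans hswap.symm
      | cast y =>
        induction y using Fin.lastCases with
        | last => exact (ext2_b f).trans hb.symm
        | cast i => exact (ext2_castSucc f i).trans (hfcs i)

lemma gfun_rec (n : ℕ) : Nat.card (GFun (n + 2)) = Nat.card (GFun (n + 1)) + Nat.card (GFun n) := by
  rw [← Nat.card_eq_of_bijective _ Fsum_bij, Nat.card_sum]

lemma gfun_zero : Nat.card (GFun 0) = 1 := by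
  rw [Nat.card_eq_one_iff_unique]
  constructor
  · constructor
    rintro ⟨f, _⟩ ⟨g, _⟩
    apply Subtype.ext
    funext i
    exact absurd i.isLt (by omega)
  · exact ⟨⟨id, fun x => rfl, fun i => Or.inl rfl⟩⟩

lemma gfun_one : Nat.card (GFun 1) = 1 := by
  rw [Nat.card_eq_one_iff_unique]
  constructor
  · constructor
    rintro ⟨f, _⟩ ⟨g, _⟩
    apply Subtype.ext
    funext i
    apply Fin.ext
    have := (f i).isLt
    have := (g i).isLt
    omega
  · exact ⟨⟨id, fun x => rfl, fun i => Or.inl rfl⟩⟩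

lemma gfun_card (n : ℕ) : Nat.card (GFun n) = Nat.fib (n + 1) := by
  induction n using Nat.strong_induction_on with
  | _ n ih =>
    match n with
    | 0 => simpa using gfun_zero
    | 1 => simpa using gfun_one
    | (m + 2) =>
      rw [gfun_rec, ih (m + 1) (by omega), ih m (by omega)]
      have h1 : Nat.fib (m + 2 + 1) = Nat.fib (m + 1) + Nat.fib (m + 1 + 1) := Nat.fib_add_two
      have h2 : Nat.fib (m + 1 + 1) = Nat.fib m + Nat.fib (m + 1) := Nat.fib_add_two
      omega

lemma invol_of_sq {n : ℕ} {τ : Equiv.Perm (Fin n)} (h : τ * τ = 1) :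
    Function.Involutive ⇑τ := fun x => by
  have := congrFun (congrArg (fun e => (Equiv.toFun e)) h) x
  simpa using this

theorem card_involutions_avoiding_3412_321 (n : ℕ) :
    Nat.card {τ : Equiv.Perm (Fin n) // τ * τ = 1 ∧ Av3412 τ ∧ Av321 τ} =
      Nat.fib (n + 1) := by
  rw [← gfun_card]
  apply Nat.card_congr
  refine ⟨fun τ => ⟨⇑τ.1, invol_of_sq τ.2.1, nn_of_av τ.1 (invol_of_sq τ.2.1) τ.2.2.1 τ.2.2.2⟩,
    fun f => ⟨f.2.1.toPerm, ?_, ?_⟩, ?_, ?_⟩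
  · ext x
    simp [Equiv.Perm.mul_apply, f.2.1 x]
  · have hco : ⇑(f.2.1.toPerm) = f.1 := f.2.1.coe_toPerm
    exact av_of_nn _ (by rw [hco]; exact f.2.2)
  · intro τ
    apply Subtype.ext
    apply Equiv.ext
    intro x
    rfl
  · intro f
    apply Subtype.ext
    exact f.2.1.coe_toPerm
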